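/- Let P(λ) = λ(J₁+R₁) + (J₂+R₂) be an n×n complex posH pencil such that for every x ∈ ℂⁿ the real number −(x*R₁x)(x*R₂x) + (x*J₁x)(x*J₂x) is ≤ 0. Assume that P(λ) is regular, i.e., det(λ₀(J₁+R₁) + (J₂+R₂)) ≠ 0 for some λ₀ ∈ ℂ, and that the numerical range of the pencil λJ₁ + J₂ is contained in the closed left half-plane, i.e., whenever μ ∈ ℂ and x ∈ ℂⁿ is nonzero with x*(μJ₁ + J₂)x = 0 one has Re μ ≤ 0. Then the numerical range of P(λ) is contained in the closed left half-plane: whenever μ ∈ ℂ and x ∈ ℂⁿ is nonzero with x*(μ(J₁+R₁) + (J₂+R₂))x = 0, one has Re μ ≤ 0. -/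

import Mathlib

open Matrix
open scoped ComplexOrder

lemma skew_re_zero {n : ℕ} (J : Matrix (Fin n) (Fin n) ℂ) (hJ : Jᴴ = -J) (x : Fin n → ℂ) :
    (star x ⬝ᵥ (J *ᵥ x)).re = 0 := by
  have h : star (star x ⬝ᵥ (J *ᵥ x)) = star x ⬝ᵥ (Jᴴ *ᵥ x) := by
    rw [star_dotProduct, star_star, star_mulVec, dotProduct_mulVec]
  rw [hJ] at h
  simp [Matrix.neg_mulVec, Complex.ext_iff] at h
  linarith

/-- Theorem 4.15(b): let `P(λ) = λ(J₁+R₁) + (J₂+R₂)` be a posH pencil such that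
`-(x*R₁x)(x*R₂x) + (x*J₁x)(x*J₂x) ≤ 0` for all `x`, `P(λ)` is regular, and the
numerical range of `λJ₁ + J₂` is contained in the closed left half-plane. Then
the numerical range of `P(λ)` is contained in the closed left half-plane. -/
theorem posH_numrange_left_half_plane_of_regular {n : ℕ}
    (J₁ J₂ R₁ R₂ : Matrix (Fin n) (Fin n) ℂ)
    (hJ₁ : J₁ᴴ = -J₁) (hJ₂ : J₂ᴴ = -J₂)
    (hR₁ : R₁.PosSemidef) (hR₂ : R₂.PosSemidef)
    (hcond : ∀ x : Fin n → ℂ,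
      (-(star x ⬝ᵥ (R₁ *ᵥ x)) * (star x ⬝ᵥ (R₂ *ᵥ x)) +
        (star x ⬝ᵥ (J₁ *ᵥ x)) * (star x ⬝ᵥ (J₂ *ᵥ x))).re ≤ 0)
    (hreg : ∃ μ : ℂ, (μ • (J₁ + R₁) + (J₂ + R₂)).det ≠ 0)
    (hskew : ∀ (μ : ℂ) (x : Fin n → ℂ), x ≠ 0 →
      star x ⬝ᵥ ((μ • J₁ + J₂) *ᵥ x) = 0 → μ.re ≤ 0) :
    ∀ (μ : ℂ) (x : Fin n → ℂ), x ≠ 0 →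
      star x ⬝ᵥ ((μ • (J₁ + R₁) + (J₂ + R₂)) *ᵥ x) = 0 → μ.re ≤ 0 := by
  intro μ x hx h
  set a := star x ⬝ᵥ (J₁ *ᵥ x) with ha
  set b := star x ⬝ᵥ (J₂ *ᵥ x) with hb
  set r₁ := star x ⬝ᵥ (R₁ *ᵥ x) with hr₁
  set r₂ := star x ⬝ᵥ (R₂ *ᵥ x) with hr₂
  have hare : a.re = 0 := skew_re_zero J₁ hJ₁ x
  have hbre : b.re = 0 := skew_re_zero J₂ hJ₂ x
  have h1 : 0 ≤ r₁ := hR₁.dotProduct_mulVec_nonneg x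
  have h2 : 0 ≤ r₂ := hR₂.dotProduct_mulVec_nonneg x
  rw [Complex.le_def] at h1 h2
  simp at h1 h2
  have him1 : r₁.im = 0 := h1.2.symm
  have him2 : r₂.im = 0 := h2.2.symm
  have heq : μ * (a + r₁) + (b + r₂) = 0 := by
    rw [ha, hb, hr₁, hr₂, ← h]
    simp [Matrix.add_mulVec, Matrix.smul_mulVec, dotProduct_add, smul_eq_mul]
    ring
  by_cases hz : a + r₁ = 0
  · have hre0 : a.im + r₁.im = 0 := by
      have := congrArg Complex.im hz; simpa using this
    have ha0 : a = 0 := Complex.ext hare (by simp only [Complex.zero_im]; linarith)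
    have hr10 : r₁ = 0 := by
      have := congrArg Complex.re hz; simp [hare] at this
      exact Complex.ext this him1
    rw [hz, mul_zero, zero_add] at heq
    have hbim : b.im + r₂.im = 0 := by
      have := congrArg Complex.im heq; simpa using this
    have hb0 : b = 0 := Complex.ext hbre (by simp only [Complex.zero_im]; linarith)
    apply hskew μ x hx
    have hexp : star x ⬝ᵥ ((μ • J₁ + J₂) *ᵥ x) = μ * a + b := by
      rw [ha, hb]
      simp [Matrix.add_mulVec, Matrix.smul_mulVec, dotProduct_add, smul_eq_mul]
    rw [hexp, ha0, hb0]; simp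
  · have hμ : μ = -(b + r₂) / (a + r₁) := by
      field_simp
      linear_combination heq
    have hc := hcond x
    rw [← ha, ← hb, ← hr₁, ← hr₂] at hc
    have hcre : 0 ≤ r₁.re * r₂.re + a.im * b.im := by
      simp [Complex.add_re, Complex.mul_re, Complex.neg_re, hare, hbre, him1, him2] at hc
      linarith
    have hns : 0 < Complex.normSq (a + r₁) := by rwa [Complex.normSq_pos]
    rw [hμ, Complex.div_re, ← add_div]
    apply div_nonpos_of_nonpos_of_nonneg _ (le_of_lt hns)
    simp [Complex.add_re, Complex.add_im, hare, hbre, him1, him2]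
    nlinarith
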